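/- Define operators on functions f: ℕ → ℝ (with the convention f(-1)=0) by (a f)(s) = (1-q)^{-1/2}[μ^{1/2} q^s f(s) - √((1-q^{s+1})(1-μq^s)) f(s+1)] and (a⁺ f)(s) = (1-q)^{-1/2}[μ^{1/2} q^s f(s) - √((1-q^s)(1-μq^{s-1})) f(s-1)]. Then for 0 < q < 1, 0 < μ < 1, these satisfy the q-commutation relation a a⁺ - q a⁺ a = I (the identity operator) on all such functions. -/

import Mathlib

open Finset

/-- q-shifted factorial `(a;q)_k`. -/
noncomputable def qPoch (a q : ℝ) (k : ℕ) : ℝ :=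
  ∏ j ∈ Finset.range k, (1 - a * q ^ j)

/-- infinite q-shifted factorial `(a;q)_∞`. -/
noncomputable def qPochInf (a q : ℝ) : ℝ :=
  ∏' j : ℕ, (1 - a * q ^ j)

/-- Al-Salam–Carlitz q-Charlier polynomial `c_n^μ(x|q)`. -/
noncomputable def qCharlier (μ q : ℝ) (n : ℕ) (x : ℝ) : ℝ :=
  ∑ k ∈ Finset.range (n + 1),
    qPoch (q ^ (-(n : ℤ))) q k * qPoch x q k / qPoch q q k * (q ^ (1 + n) / μ) ^ k

/-- Orthogonality weight `ρ(s)`. -/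
noncomputable def qCharlierWeight (q μ : ℝ) (s : ℕ) : ℝ :=
  qPochInf μ q * μ ^ s * q ^ (s ^ 2) / (qPoch q q s * qPoch μ q s)

/-- q-wave functions `ψ_n(s)`. -/
noncomputable def qWave (q μ : ℝ) (n s : ℕ) : ℝ :=
  (1 / Real.sqrt (qPoch q q n / μ ^ n)) * Real.sqrt ((q : ℝ) ^ (-(s : ℤ))) *
    Real.sqrt (qCharlierWeight q μ s) * qCharlier μ q n (q ^ (-(s : ℤ)))

/-- q-annihilation operator `a`. -/
noncomputable def qAnnih (q μ : ℝ) (f : ℕ → ℝ) (s : ℕ) : ℝ :=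
  (1 / Real.sqrt (1 - q)) *
    (Real.sqrt μ * q ^ s * f s -
      Real.sqrt ((1 - q ^ (s + 1)) * (1 - μ * q ^ s)) * f (s + 1))

/-- q-creation operator `a⁺` (with the convention `f (-1) = 0`). -/
noncomputable def qCreat (q μ : ℝ) (f : ℕ → ℝ) (s : ℕ) : ℝ :=
  (1 / Real.sqrt (1 - q)) *
    (Real.sqrt μ * q ^ s * f s -
      Real.sqrt ((1 - q ^ s) * (1 - μ * q ^ ((s : ℤ) - 1))) *
        (if s = 0 then 0 else f (s - 1)))

theorem q_commutation (q μ : ℝ) (hq : 0 < q) (hq1 : q < 1)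
    (hμ : 0 < μ) (hμ1 : μ < 1) (f : ℕ → ℝ) (s : ℕ) :
    qAnnih q μ (qCreat q μ f) s - q * qCreat q μ (qAnnih q μ f) s = f s := by
  have h1q : (0:ℝ) < 1 - q := by linarith
  have hr : Real.sqrt (1 - q) ≠ 0 := by positivity
  have hr2 : Real.sqrt (1 - q) * Real.sqrt (1 - q) = 1 - q := Real.mul_self_sqrt h1q.le
  have hm2 : Real.sqrt μ * Real.sqrt μ = μ := Real.mul_self_sqrt hμ.le
  have hAk : ∀ k l : ℕ, (0:ℝ) ≤ (1 - q ^ k) * (1 - μ * q ^ l) := by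
    intro k l
    have h1 : q ^ k ≤ 1 := pow_le_one₀ hq.le hq1.le
    have h2 : q ^ l ≤ 1 := pow_le_one₀ hq.le hq1.le
    have h3 : μ * q ^ l ≤ 1 := by nlinarith [pow_pos hq l]
    have := mul_nonneg (by linarith : (0:ℝ) ≤ 1 - q ^ k) (by linarith : (0:ℝ) ≤ 1 - μ * q ^ l)
    linarith
  cases s with
  | zero =>
    simp only [qAnnih, qCreat]
    norm_num
    have hW : Real.sqrt (1-μ) * Real.sqrt (1-μ) = 1-μ :=
      Real.mul_self_sqrt (by linarith)
    field_simp
    have hS : Real.sqrt ((1 - q) * (1 - μ)) * Real.sqrt ((1 - q) * (1 - μ)) = (1 - q) * (1 - μ) :=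
      Real.mul_self_sqrt (mul_nonneg h1q.le (by linarith))
    linear_combination (1-q) * f 0 * hm2 + f 0 * hS - f 0 * hr2
  | succ n =>
    have e1 : ((n+1 : ℕ) : ℤ) - 1 = (n : ℤ) := by push_cast; ring
    have e2 : ((n+1+1 : ℕ) : ℤ) - 1 = ((n+1 : ℕ) : ℤ) := by push_cast; ring
    simp only [qAnnih, qCreat, Nat.succ_ne_zero, if_false, Nat.add_sub_cancel, e1, e2,
      zpow_natCast]
    have ha2 : Real.sqrt ((1 - q ^ (n+1+1)) * (1 - μ * q ^ (n+1))) *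
        Real.sqrt ((1 - q ^ (n+1+1)) * (1 - μ * q ^ (n+1))) =
        (1 - q ^ (n+1+1)) * (1 - μ * q ^ (n+1)) := Real.mul_self_sqrt (hAk _ _)
    have hb2 : Real.sqrt ((1 - q ^ (n+1)) * (1 - μ * q ^ n)) *
        Real.sqrt ((1 - q ^ (n+1)) * (1 - μ * q ^ n)) =
        (1 - q ^ (n+1)) * (1 - μ * q ^ n) := Real.mul_self_sqrt (hAk _ _)
    field_simp
    have hT : Real.sqrt ((1 - q ^ (n+1+1)) * (1 - q ^ (n+1) * μ)) *
        Real.sqrt ((1 - q ^ (n+1+1)) * (1 - q ^ (n+1) * μ)) =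
        (1 - q ^ (n+1+1)) * (1 - q ^ (n+1) * μ) :=
      Real.mul_self_sqrt (by rw [mul_comm (q ^ (n+1)) μ]; exact hAk _ _)
    linear_combination f (n+1) * hT - q * f (n+1) * hb2 +
      (1-q) * q^(n+1) * q^(n+1) * f (n+1) * hm2 - f (n+1) * hr2
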